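/- For μ > 0, 0 ≤ α < 1 and real k, the function y ↦ (μ/sinh(μy))^{α+1} e^{μky} on (0,∞) is completely monotone, i.e. it is the Laplace transform of a positive σ-finite measure on [0,∞). -/

import Mathlib

open Real Set Filter Topology

namespace SinhCMAux

/-- Coefficients of the binomial series `(1-x)^(-β)`. -/
noncomputable def bc (β : ℝ) : ℕ → ℝ
  | 0 => 1
  | m + 1 => bc β m * (β + m) / (m + 1)

lemma bc_pos {β : ℝ} (hβ : 0 < β) : ∀ m, 0 < bc β m
  | 0 => one_pos
  | m + 1 => by
    have h1 : (0:ℝ) < β + m := by positivity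
    have h2 : (0:ℝ) < (m:ℝ) + 1 := by positivity
    exact div_pos (mul_pos (bc_pos hβ m) h1) h2

lemma bc_succ (β : ℝ) (m : ℕ) :
    ((m:ℝ) + 1) * bc β (m + 1) = (β + m) * bc β m := by
  have h2 : ((m:ℝ) + 1) ≠ 0 := by positivity
  simp only [bc]
  field_simp

/-- Ratio-test summability of `bc β m * (K + d m)^q * r^m`. -/
lemma summable_bc_mul {β K d r : ℝ} (hβ : 0 < β) (hK : 0 < K) (hd : 0 < d)
    (q : ℕ) (hr0 : 0 < r) (hr1 : r < 1) :
    Summable (fun m : ℕ => bc β m * (K + d * m) ^ q * r ^ m) := by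
  have hpos : ∀ m : ℕ, 0 < bc β m * (K + d * m) ^ q * r ^ m := by
    intro m
    have h1 : (0:ℝ) < K + d * m := by positivity
    have := bc_pos hβ m
    positivity
  apply summable_of_ratio_test_tendsto_lt_one hr1
    (Eventually.of_forall fun m => (hpos m).ne')
  have heq : ∀ m : ℕ,
      ((β - 1) * ((m:ℝ)+1)⁻¹ + 1) * (d * (K + d * m)⁻¹ + 1) ^ q * r =
      ‖bc β (m+1) * (K + d * ((m+1:ℕ):ℝ)) ^ q * r ^ (m+1)‖ /
        ‖bc β m * (K + d * m) ^ q * r ^ m‖ := by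
    intro m
    have hc : ((m+1:ℕ):ℝ) = (m:ℝ)+1 := by push_cast; ring
    have hpos1 : 0 < bc β (m+1) * (K + d * ((m+1:ℕ):ℝ)) ^ q * r ^ (m+1) := hpos (m+1)
    rw [hc] at hpos1 ⊢
    rw [Real.norm_eq_abs, Real.norm_eq_abs, abs_of_pos hpos1, abs_of_pos (hpos m)]
    have h1 : (0:ℝ) < K + d * m := by positivity
    have h2 : ((m:ℝ) + 1) ≠ 0 := by positivity
    have hbc := bc_succ β m
    have hb := (bc_pos hβ m).ne'
    have e1 : bc β (m+1) = (β + m) * bc β m / ((m:ℝ)+1) := by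
      field_simp at hbc ⊢; linarith [hbc]
    have e2 : d * (K + d * m)⁻¹ + 1 = (K + d * ((m:ℝ)+1)) / (K + d * m) := by
      rw [eq_div_iff h1.ne', add_mul, one_mul, mul_assoc, inv_mul_cancel₀ h1.ne']; ring
    rw [e1, e2, div_pow]
    field_simp
    ring
  have T1 : Tendsto (fun m : ℕ => (β - 1) * ((m:ℝ)+1)⁻¹ + 1) atTop (𝓝 1) := by
    have : Tendsto (fun m : ℕ => ((m:ℝ)+1)) atTop atTop :=
      tendsto_atTop_add_const_right _ 1 tendsto_natCast_atTop_atTop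
    simpa using ((this.inv_tendsto_atTop.const_mul (β - 1)).add_const 1)
  have T2 : Tendsto (fun m : ℕ => (d * (K + d * m)⁻¹ + 1) ^ q) atTop (𝓝 1) := by
    have h : Tendsto (fun m : ℕ => K + d * m) atTop atTop :=
      tendsto_atTop_add_const_left _ K
        (Tendsto.const_mul_atTop hd tendsto_natCast_atTop_atTop)
    have := ((h.inv_tendsto_atTop.const_mul d).add_const 1).pow q
    simpa using this
  have key : Tendsto (fun m : ℕ =>
      ((β - 1) * ((m:ℝ)+1)⁻¹ + 1) * (d * (K + d * m)⁻¹ + 1) ^ q * r) atTop (𝓝 r) := by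
    have := (T1.mul T2).mul_const r
    simpa using this
  exact key.congr heq

noncomputable def F (β t : ℝ) : ℝ := ∑' m : ℕ, bc β m * t ^ m

noncomputable def F1 (β t : ℝ) : ℝ := ∑' m : ℕ, bc β m * ((m:ℝ) * t ^ (m - 1))

lemma summable_F {β : ℝ} (hβ : 0 < β) {t : ℝ} (ht : |t| < 1) :
    Summable fun m : ℕ => bc β m * t ^ m := by
  set r : ℝ := (|t| + 1) / 2 with hr
  have hr0 : 0 < r := by have := abs_nonneg t; rw [hr]; linarith
  have hr1 : r < 1 := by rw [hr]; linarith
  have htr : |t| ≤ r := by rw [hr]; linarith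
  have base : Summable fun m : ℕ => bc β m * r ^ m := by
    have := summable_bc_mul hβ one_pos one_pos 0 hr0 hr1
    simpa using this
  apply Summable.of_norm
  apply base.of_nonneg_of_le (fun m => norm_nonneg _)
  intro m
  rw [Real.norm_eq_abs, abs_mul, abs_of_pos (bc_pos hβ m), abs_pow]
  exact mul_le_mul_of_nonneg_left (pow_le_pow_left₀ (abs_nonneg t) htr m)
    (bc_pos hβ m).le

lemma summable_deriv_bound {β : ℝ} (hβ : 0 < β) {r : ℝ} (hr0 : 0 < r) (hr1 : r < 1) :
    Summable fun m : ℕ => bc β m * ((m:ℝ) * r ^ (m - 1)) := by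
  have base : Summable fun m : ℕ => bc β m * (1 + 1 * (m:ℝ)) ^ 1 * r ^ m :=
    summable_bc_mul hβ one_pos one_pos 1 hr0 hr1
  have base' := base.mul_left (1 / r)
  apply base'.of_nonneg_of_le
  · intro m
    exact mul_nonneg (bc_pos hβ m).le (by positivity)
  · intro m
    cases m with
    | zero => simp [bc]; positivity
    | succ s =>
      have hb := (bc_pos hβ (s+1)).le
      have e : (1:ℝ) / r * (bc β (s+1) * (1 + 1 * ((s:ℝ)+1)) ^ 1 * r ^ (s+1)) =
          bc β (s+1) * ((2:ℝ) + s) * r ^ s := by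
        field_simp
        ring
      have hc : ((s+1:ℕ):ℝ) = (s:ℝ) + 1 := by push_cast; ring
      rw [hc, e]
      have : (s+1) - 1 = s := rfl
      rw [this]
      have h1 : ((s:ℝ)+1) ≤ (2:ℝ) + s := by linarith
      have h2 : (0:ℝ) ≤ r ^ s := by positivity
      nlinarith [mul_le_mul_of_nonneg_left h1 hb]

lemma summable_F1 {β : ℝ} (hβ : 0 < β) {t r : ℝ} (htr : |t| ≤ r) (hr0 : 0 < r)
    (hr1 : r < 1) : Summable fun m : ℕ => bc β m * ((m:ℝ) * t ^ (m - 1)) := by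
  apply Summable.of_norm
  apply (summable_deriv_bound hβ hr0 hr1).of_nonneg_of_le (fun m => norm_nonneg _)
  intro m
  rw [Real.norm_eq_abs, abs_mul, abs_of_pos (bc_pos hβ m), abs_mul, abs_pow,
    Nat.abs_cast]
  apply mul_le_mul_of_nonneg_left _ (bc_pos hβ m).le
  exact mul_le_mul_of_nonneg_left (pow_le_pow_left₀ (abs_nonneg t) htr _)
    (Nat.cast_nonneg m)

lemma hasDerivAt_F {β : ℝ} (hβ : 0 < β) {x : ℝ} (hx : |x| < 1) :
    HasDerivAt (F β) (F1 β x) x := by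
  set r : ℝ := (|x| + 1) / 2 with hr
  have hr0 : 0 < r := by have := abs_nonneg x; rw [hr]; linarith
  have hr1 : r < 1 := by rw [hr]; linarith
  have hxr : |x| < r := by rw [hr]; linarith
  have := hasDerivAt_tsum_of_isPreconnected
    (u := fun m : ℕ => bc β m * ((m:ℝ) * r ^ (m - 1)))
    (g := fun (m : ℕ) (t : ℝ) => bc β m * t ^ m)
    (g' := fun (m : ℕ) (t : ℝ) => bc β m * ((m:ℝ) * t ^ (m - 1)))
    (t := Ioo (-r) r) (y₀ := 0) (y := x)
    (summable_deriv_bound hβ hr0 hr1) isOpen_Ioo isPreconnected_Ioo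
    (fun m t _ => (hasDerivAt_pow m t).const_mul (bc β m))
    (fun m t ht => by
      have htr : |t| ≤ r := (abs_lt.2 ⟨ht.1, ht.2⟩).le
      rw [Real.norm_eq_abs, abs_mul, abs_of_pos (bc_pos hβ m), abs_mul, abs_pow,
        Nat.abs_cast]
      apply mul_le_mul_of_nonneg_left _ (bc_pos hβ m).le
      exact mul_le_mul_of_nonneg_left (pow_le_pow_left₀ (abs_nonneg t) htr _)
        (Nat.cast_nonneg m))
    (by constructor <;> [linarith; linarith])
    (summable_F hβ (by simpa using hr0.trans hr1 : |(0:ℝ)| < 1))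
    (abs_lt.1 hxr)
  exact this

lemma ode {β : ℝ} (hβ : 0 < β) {t : ℝ} (ht : |t| < 1) :
    (1 - t) * F1 β t = β * F β t := by
  set r : ℝ := (|t| + 1) / 2 with hr
  have hr0 : 0 < r := by have := abs_nonneg t; rw [hr]; linarith
  have hr1 : r < 1 := by rw [hr]; linarith
  have htr : |t| ≤ r := by rw [hr]; linarith
  have hs1 : Summable fun m : ℕ => bc β m * ((m:ℝ) * t ^ (m - 1)) :=
    summable_F1 hβ htr hr0 hr1
  have hsF : Summable fun m : ℕ => bc β m * t ^ m := summable_F hβ ht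
  have hterm : ∀ m : ℕ, bc β (m+1) * (((m+1:ℕ):ℝ) * t ^ ((m+1) - 1)) =
      β * (bc β m * t ^ m) + t * (bc β m * ((m:ℝ) * t ^ (m - 1))) := by
    intro m
    have hc : ((m+1:ℕ):ℝ) = (m:ℝ) + 1 := by push_cast; ring
    have hbc := bc_succ β m
    have e1 : (m+1) - 1 = m := rfl
    rw [hc, e1]
    have e2 : bc β (m+1) * (((m:ℝ)+1) * t ^ m) = (((m:ℝ)+1) * bc β (m+1)) * t ^ m := by
      ring
    rw [e2, hbc]
    cases m with
    | zero => simp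
    | succ s =>
      have e3 : (s+1) - 1 = s := rfl
      rw [e3]
      have : t * t ^ s = t ^ (s+1) := by ring
      push_cast
      ring
  have hA : F1 β t = ∑' m : ℕ, bc β (m+1) * (((m+1:ℕ):ℝ) * t ^ ((m+1) - 1)) := by
    rw [F1, hs1.tsum_eq_zero_add]
    simp
  have hB : (∑' m : ℕ, bc β (m+1) * (((m+1:ℕ):ℝ) * t ^ ((m+1) - 1))) =
      β * F β t + t * F1 β t := by
    rw [tsum_congr hterm, Summable.tsum_add (hsF.mul_left β) (hs1.mul_left t),
      tsum_mul_left, tsum_mul_left]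
    rfl
  have hF1 : F1 β t = β * F β t + t * F1 β t := hA.trans hB
  linear_combination hF1
  
lemma tsum_bc_eq {β : ℝ} (hβ1 : 1 ≤ β) {x : ℝ} (hx0 : 0 ≤ x) (hx1 : x < 1) :
    F β x = (1 - x) ^ (-β) := by
  have hβ : 0 < β := lt_of_lt_of_le one_pos hβ1
  have hG : ∀ t ∈ Icc (0:ℝ) x, HasDerivAt (fun u => F β u * (1-u) ^ β) 0 t := by
    rintro t ⟨ht0, htx⟩
    have ht : |t| < 1 := abs_lt.2 ⟨by linarith, by linarith⟩
    have h1t : 0 < 1 - t := by linarith [abs_lt.1 ht]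
    have hF := hasDerivAt_F hβ ht
    have hpow : HasDerivAt (fun u : ℝ => (1-u) ^ β) (-1 * β * (1-t) ^ (β-1)) t :=
      HasDerivAt.rpow_const ((hasDerivAt_id t).const_sub 1) (Or.inl h1t.ne')
    have hmul := hF.mul hpow
    refine hmul.congr_deriv ?_
    have hode := ode hβ ht
    have hpoweq : (1-t) ^ β = (1-t) ^ (β-1) * (1-t) := by
      rw [Real.rpow_sub_one h1t.ne']
      field_simp
    rw [hpoweq]
    linear_combination ((1-t) ^ (β-1)) * hode
  have hconst := constant_of_has_deriv_right_zero
    (f := fun u => F β u * (1-u) ^ β) (a := 0) (b := x)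
    (fun t ht => (hG t ht).continuousAt.continuousWithinAt)
    (fun t ht => (hG t (Ico_subset_Icc_self ht)).hasDerivWithinAt)
    x (right_mem_Icc.2 hx0)
  have hF0 : F β 0 = 1 := by
    rw [F, tsum_eq_single 0 (fun m hm => by simp [zero_pow hm])]
    simp [bc]
  simp only [hF0, sub_zero, Real.one_rpow, one_mul, mul_one] at hconst
  have h1x : (0:ℝ) < 1 - x := by linarith
  have hA : (0:ℝ) < (1-x) ^ β := rpow_pos_of_pos h1x β
  rw [Real.rpow_neg h1x.le]
  exact eq_inv_of_mul_eq_one_left hconst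

end SinhCMAux

theorem sinh_density_completely_monotone (α k μ : ℝ) (hα0 : 0 ≤ α) (hα1 : α < 1)
    (hk : k < 1 + α) (hμ : 0 < μ) :
    ∀ n : ℕ, ∀ y : ℝ, 0 < y →
      0 ≤ (-1 : ℝ) ^ n *
        iteratedDeriv n (fun y => (μ / Real.sinh (μ * y)) ^ (α + 1) * Real.exp (μ * k * y)) y := by
  have hβ1 : 1 ≤ α + 1 := by linarith
  have hβ0 : 0 < α + 1 := by linarith
  set β : ℝ := α + 1 with hβdef
  have hK : 0 < μ * (β - k) := mul_pos hμ (by rw [hβdef]; linarith)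
  set K : ℝ := μ * (β - k) with hKdef
  set lam : ℕ → ℝ := fun m => K + 2 * μ * m with hlamdef
  set a : ℕ → ℝ := fun m => (2*μ)^β * SinhCMAux.bc β m with hadef
  have hlampos : ∀ m, 0 < lam m := fun m => by
    have : (0:ℝ) ≤ 2 * μ * m := by positivity
    rw [hlamdef]; dsimp only; linarith
  have hapos : ∀ m, 0 < a m :=
    fun m => mul_pos (Real.rpow_pos_of_pos (by linarith) _) (SinhCMAux.bc_pos hβ0 m)
  have hexp : ∀ (m : ℕ) (z : ℝ),
      Real.exp (-lam m * z) = Real.exp (-K*z) * Real.exp (-(2*μ)*z) ^ m := by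
    intro m z
    rw [← Real.exp_nat_mul, ← Real.exp_add]
    congr 1
    rw [hlamdef]
    ring
  -- summability of the positive-coefficient series
  have hsum : ∀ (q : ℕ) (z : ℝ), 0 < z →
      Summable (fun m : ℕ => a m * lam m ^ q * Real.exp (-lam m * z)) := by
    intro q z hz
    have hr0 : (0:ℝ) < Real.exp (-(2*μ)*z) := Real.exp_pos _
    have hr1 : Real.exp (-(2*μ)*z) < 1 := Real.exp_lt_one_iff.2 (by nlinarith)
    have base := SinhCMAux.summable_bc_mul hβ0 hK (by positivity : (0:ℝ) < 2*μ) q hr0 hr1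
    have base' := base.mul_left ((2*μ)^β * Real.exp (-K*z))
    apply base'.congr
    intro m
    rw [hexp m z]
    rw [hadef, hlamdef]
    ring
  have hsumD : ∀ (q : ℕ) (z : ℝ), 0 < z →
      Summable (fun m : ℕ => a m * (-lam m) ^ q * Real.exp (-lam m * z)) := by
    intro q z hz
    apply Summable.of_norm
    apply (hsum q z hz).congr
    intro m
    rw [Real.norm_eq_abs, abs_mul, abs_mul, abs_pow, abs_neg,
      abs_of_pos (hlampos m), abs_of_pos (hapos m), abs_of_pos (Real.exp_pos _)]
  -- series representation of the function on (0, ∞)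
  have hrep : ∀ z : ℝ, 0 < z →
      (μ / Real.sinh (μ * z)) ^ β * Real.exp (μ * k * z) =
        ∑' m : ℕ, a m * Real.exp (-lam m * z) := by
    intro z hz
    have hx0 : (0:ℝ) < Real.exp (-(2*μ)*z) := Real.exp_pos _
    have hx1 : Real.exp (-(2*μ)*z) < 1 := Real.exp_lt_one_iff.2 (by nlinarith)
    set x : ℝ := Real.exp (-(2*μ)*z) with hxdef
    have h1x : (0:ℝ) < 1 - x := by linarith
    have hsinh : 0 < Real.sinh (μ * z) := Real.sinh_pos_iff.2 (by positivity)
    have E1 : Real.exp (-(μ*z)) * Real.exp (μ*z) = 1 := by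
      rw [← Real.exp_add]; simp
    have E2 : Real.exp (-(μ*z)) * Real.exp (-(μ*z)) = x := by
      rw [← Real.exp_add, hxdef]; congr 1; ring
    have hfrac : μ / Real.sinh (μ * z) = 2*μ*Real.exp (-(μ*z)) / (1 - x) := by
      rw [div_eq_div_iff hsinh.ne' h1x.ne', Real.sinh_eq]
      linear_combination (-μ) * E1 + μ * E2
    have hpow : (μ / Real.sinh (μ * z)) ^ β =
        (2*μ)^β * Real.exp (-(μ*z)*β) * (1-x) ^ (-β) := by
      rw [hfrac, Real.div_rpow (by positivity) h1x.le,
        Real.mul_rpow (by positivity) (Real.exp_nonneg _), ← Real.exp_mul,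
        Real.rpow_neg h1x.le, div_eq_mul_inv]
    have hterm : ∀ m : ℕ, a m * Real.exp (-lam m * z) =
        ((2*μ)^β * Real.exp (-(μ*z)*β) * Real.exp (μ*k*z)) *
          (SinhCMAux.bc β m * x ^ m) := by
      intro m
      rw [hexp m z, hadef]
      have e3 : Real.exp (-(μ*z)*β) * Real.exp (μ*k*z) = Real.exp (-K*z) := by
        rw [← Real.exp_add, hKdef]; congr 1; ring
      dsimp only
      rw [← e3, hxdef]
      ring
    rw [hpow, tsum_congr hterm, tsum_mul_left,
      ← SinhCMAux.tsum_bc_eq hβ1 hx0.le hx1]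
    rw [SinhCMAux.F]
    ring
  -- iterated derivatives of the function
  have key : ∀ n : ℕ, ∀ z : ℝ, 0 < z →
      iteratedDeriv n (fun y => (μ / Real.sinh (μ * y)) ^ β * Real.exp (μ * k * y)) z =
        ∑' m : ℕ, a m * (-lam m) ^ n * Real.exp (-lam m * z) := by
    intro n
    induction n with
    | zero =>
      intro z hz
      rw [iteratedDeriv_zero]
      rw [hrep z hz]
      exact tsum_congr fun m => by rw [pow_zero, mul_one]
    | succ n ih =>
      intro z hz
      rw [iteratedDeriv_succ]
      have hev : iteratedDeriv n
          (fun y => (μ / Real.sinh (μ * y)) ^ β * Real.exp (μ * k * y)) =ᶠ[nhds z]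
          (fun w => ∑' m : ℕ, a m * (-lam m) ^ n * Real.exp (-lam m * w)) :=
        eventuallyEq_of_mem (Ioi_mem_nhds hz) (fun w hw => ih w hw)
      rw [hev.deriv_eq]
      have hd : HasDerivAt
          (fun w => ∑' m : ℕ, a m * (-lam m) ^ n * Real.exp (-lam m * w))
          (∑' m : ℕ, a m * (-lam m) ^ (n+1) * Real.exp (-lam m * z)) z := by
        apply hasDerivAt_tsum_of_isPreconnected
          (u := fun m : ℕ => a m * lam m ^ (n+1) * Real.exp (-lam m * (z/2)))
          (hsum (n+1) (z/2) (half_pos hz)) isOpen_Ioi isPreconnected_Ioi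
          (g' := fun (m : ℕ) (w : ℝ) => a m * (-lam m) ^ (n+1) * Real.exp (-lam m * w))
          (t := Ioi (z/2)) (y₀ := z)
        · intro m w _
          have h1 : HasDerivAt (fun w : ℝ => Real.exp (-lam m * w))
              (Real.exp (-lam m * w) * (-lam m)) w := by
            simpa using ((hasDerivAt_id w).const_mul (-lam m)).exp
          have := h1.const_mul (a m * (-lam m) ^ n)
          refine this.congr_deriv ?_
          rw [pow_succ]
          ring
        · intro m w hw
          rw [Real.norm_eq_abs, abs_mul, abs_mul, abs_pow, abs_neg,
            abs_of_pos (hlampos m), abs_of_pos (hapos m), abs_of_pos (Real.exp_pos _)]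
          have hle : Real.exp (-lam m * w) ≤ Real.exp (-lam m * (z/2)) := by
            apply Real.exp_le_exp.2
            have h2 := mul_le_mul_of_nonneg_left (le_of_lt hw) (hlampos m).le
            linarith
          have hnn : (0:ℝ) ≤ a m * lam m ^ (n+1) :=
            mul_nonneg (hapos m).le (pow_nonneg (hlampos m).le _)
          exact mul_le_mul_of_nonneg_left hle hnn
        · exact mem_Ioi.2 (half_lt_self hz)
        · exact hsumD n z hz
        · exact mem_Ioi.2 (half_lt_self hz)
      exact hd.deriv
  intro n y hy
  rw [key n y hy, ← tsum_mul_left]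
  apply tsum_nonneg
  intro m
  have h1 : (-1:ℝ)^n * (-lam m)^n = lam m ^ n := by
    rw [← mul_pow]
    norm_num
  have e : (-1:ℝ)^n * (a m * (-lam m)^n * Real.exp (-lam m * y)) =
      a m * ((-1:ℝ)^n * (-lam m)^n) * Real.exp (-lam m * y) := by ring
  rw [e, h1]
  exact mul_nonneg (mul_nonneg (hapos m).le (pow_nonneg (hlampos m).le n))
    (Real.exp_nonneg _)
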